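/- Define b(i,k) := ∫_{-∞}^{∞} e^{-x²} H_i'(x) sin(x) H_k(x) dx for natural numbers i ≥ 1, k ≥ 0. Then b satisfies the recurrence i(2i - 2k - 5) b(i+1, k+1) + (i+1) b(i, k+2) - 4(k+1)(i+1)(i-k-2) b(i,k) = 0 for all i ≥ 1, k ≥ 0. -/

import Mathlib

set_option linter.unusedTactic false
set_option linter.unreachableTactic false

open MeasureTheory Real Filter

noncomputable def H : ℕ → ℝ → ℝ
  | 0 => fun _ => 1
  | 1 => fun x => 2 * x
  | (n + 2) => fun x => 2 * x * H (n + 1) x - 2 * (n + 1) * H n x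

noncomputable def b (i k : ℕ) : ℝ :=
  ∫ x : ℝ, Real.exp (-x ^ 2) * deriv (H i) x * Real.sin x * H k x

noncomputable def S : ℕ → ℕ → ℝ
  | 0, _ => 1
  | (m + 1), k => S m k - 2 * (k : ℝ) * S m (k - 1)

lemma S_succ (m k : ℕ) : S (m + 1) k = S m k - 2 * (k : ℝ) * S m (k - 1) := rfl

lemma S_zero_right (m : ℕ) : S m 0 = 1 := by
  induction m with
  | zero => rfl
  | succ m ih => rw [S_succ]; simp [ih]

lemma S_one_right (m : ℕ) : S m 1 = 1 - 2 * m := by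
  induction m with
  | zero => simp [S]
  | succ m ih => rw [S_succ]; simp [ih, S_zero_right]; push_cast; ring

lemma Tstar (m k : ℕ) :
    (2 * (m : ℝ) - 2 * k - 1) * S (m + 1) k + S m (k + 1)
      + 4 * k * ((m : ℝ) - k) * S m (k - 1) = 0 := by
  induction m generalizing k with
  | zero =>
    rw [S_succ]
    simp only [S, Nat.cast_zero]
    ring
  | succ m ih =>
    match k with
    | 0 =>
      simp only [S_succ, Nat.zero_sub, Nat.zero_add, Nat.cast_zero,
        S_zero_right, S_one_right]
      push_cast
      try ring
      try (rw [S_zero_right]; ring)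
    | (k + 1) =>
      have h1 := ih (k + 1)
      have h2 := ih k
      have e1 : S (m + 1 + 1) (k + 1) = S (m + 1) (k + 1) - 2 * ((k : ℝ) + 1) * S (m + 1) k := by
        rw [S_succ]; push_cast; norm_num
      have e2 : S (m + 1) (k + 2) = S m (k + 2) - 2 * ((k : ℝ) + 2) * S m (k + 1) := by
        rw [S_succ]; push_cast; norm_num
      have e3 : S (m + 1) (k + 1) = S m (k + 1) - 2 * ((k : ℝ) + 1) * S m k := by
        rw [S_succ]; push_cast; norm_num
      have e4 : S (m + 1) k = S m k - 2 * (k : ℝ) * S m (k - 1) := S_succ m k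
      simp only [Nat.add_sub_cancel] at h1 h2 ⊢
      rw [e1, e2]
      rw [e3] at h1 ⊢
      rw [e4] at h2 ⊢
      push_cast at h1 h2 ⊢
      linear_combination h1 - 2 * ((k : ℝ) + 1) * h2

lemma H_succ (n : ℕ) (x : ℝ) : H (n + 1) x = 2 * x * H n x - 2 * (n : ℝ) * H (n - 1) x := by
  match n with
  | 0 => simp [H]
  | (n + 1) => simp only [H, Nat.add_sub_cancel]; push_cast; ring

lemma H_hasDerivAt (n : ℕ) (x : ℝ) : HasDerivAt (H n) (2 * (n : ℝ) * H (n - 1) x) x := by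
  induction n using Nat.strong_induction_on generalizing x with
  | _ n ih =>
    match n with
    | 0 => simpa [H] using hasDerivAt_const x (1 : ℝ)
    | 1 => simpa [H] using (hasDerivAt_id x).const_mul (2 : ℝ)
    | (n + 2) =>
      have h1 := ih (n + 1) (by omega) (x := x)
      have h0 := ih n (by omega) (x := x)
      have : HasDerivAt (H (n + 2))
          (2 * H (n + 1) x + 2 * x * (2 * (n + 1 : ℝ) * H n x)
            - 2 * (n + 1 : ℝ) * (2 * (n : ℝ) * H (n - 1) x)) x := by
        have hx : HasDerivAt (fun y : ℝ => 2 * y) 2 x := by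
          simpa using (hasDerivAt_id x).const_mul (2 : ℝ)
        have := (hx.fun_mul h1).fun_sub (h0.const_mul (2 * ((n : ℝ) + 1)))
        simp only [H]
        refine this.congr_deriv (Eq.symm ?_)
        push_cast [Nat.add_sub_cancel]
        ring
      refine this.congr_deriv (Eq.symm ?_)
      have hs := H_succ n x
      push_cast [Nat.add_sub_cancel]
      push_cast at hs
      linear_combination (2 * ((n : ℝ) + 1)) * hs

lemma H_continuous (n : ℕ) : Continuous (H n) :=
  continuous_iff_continuousAt.2 fun x => (H_hasDerivAt n x).continuousAt

lemma integrable_pow_gauss (n : ℕ) : Integrable fun x : ℝ => x ^ n * Real.exp (-x ^ 2) := by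
  have h : (-1 : ℝ) < n := lt_of_lt_of_le (by norm_num) (Nat.cast_nonneg n)
  have := integrable_rpow_mul_exp_neg_mul_sq (b := 1) one_pos (s := (n : ℝ)) h
  simpa [Real.rpow_natCast, neg_mul, one_mul] using this

lemma integrable_poly_gauss (p : Polynomial ℝ) :
    Integrable fun x : ℝ => p.eval x * Real.exp (-x ^ 2) := by
  induction p using Polynomial.induction_on' with
  | add p q hp hq => simpa [add_mul] using hp.fun_add hq
  | monomial n a =>
    simpa [Polynomial.eval_monomial, mul_assoc] using (integrable_pow_gauss n).const_mul a

noncomputable def HP : ℕ → Polynomial ℝ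
  | 0 => 1
  | 1 => Polynomial.C 2 * Polynomial.X
  | (n + 2) => Polynomial.C 2 * Polynomial.X * HP (n + 1) - Polynomial.C (2 * ((n : ℝ) + 1)) * HP n

lemma H_eq_HP (n : ℕ) (x : ℝ) : H n x = (HP n).eval x := by
  induction n using Nat.strong_induction_on with
  | _ n ih =>
    match n with
    | 0 => simp [H, HP]
    | 1 => simp [H, HP]
    | (n + 2) =>
      have e : HP (n + 2)
          = Polynomial.C 2 * Polynomial.X * HP (n + 1) - Polynomial.C (2 * ((n : ℝ) + 1)) * HP n :=
        rfl
      simp only [H, e, Polynomial.eval_sub, Polynomial.eval_mul, Polynomial.eval_C,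
        Polynomial.eval_X, ih (n + 1) (by omega), ih n (by omega)]

noncomputable def aI (m k : ℕ) : ℝ := ∫ x : ℝ, Real.exp (-x ^ 2) * H m x * Real.sin x * H k x
noncomputable def cI (m k : ℕ) : ℝ := ∫ x : ℝ, Real.exp (-x ^ 2) * H m x * Real.cos x * H k x

lemma integrable_main (m k : ℕ) (g : ℝ → ℝ) (hg : Continuous g) (hb : ∀ x, |g x| ≤ 1) :
    Integrable fun x : ℝ => Real.exp (-x ^ 2) * H m x * g x * H k x := by
  have hint := integrable_poly_gauss (HP m * HP k)
  refine hint.mono ?_ ?_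
  · exact (((((Real.continuous_exp.comp (continuous_pow 2).neg)).mul (H_continuous m)).mul
      hg).mul (H_continuous k)).aestronglyMeasurable
  · filter_upwards with x
    simp only [Real.norm_eq_abs, Polynomial.eval_mul]
    rw [abs_mul, abs_mul, abs_mul, abs_mul, abs_mul, ← H_eq_HP, ← H_eq_HP,
      abs_of_pos (Real.exp_pos _)]
    have h1 := hb x
    have h2 := abs_nonneg (g x)
    have h3 := abs_nonneg (H m x)
    have h4 := abs_nonneg (H k x)
    have h5 := (Real.exp_pos (-x ^ 2)).le
    nlinarith [mul_nonneg (mul_nonneg h5 h3) h4]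

lemma U_hasDerivAt (m : ℕ) (x : ℝ) :
    HasDerivAt (fun y => Real.exp (-y ^ 2) * H m y) (-(Real.exp (-x ^ 2) * H (m + 1) x)) x := by
  have hp : HasDerivAt (fun y : ℝ => -y ^ 2) (-(2 * x)) x := by
    simpa using (hasDerivAt_pow 2 x).fun_neg
  have he := hp.exp
  have := he.fun_mul (H_hasDerivAt m x)
  refine this.congr_deriv (Eq.symm ?_)
  have hs := H_succ m x
  push_cast at hs ⊢
  linear_combination (-(Real.exp (-x ^ 2))) * hs

lemma V_sin (k : ℕ) (x : ℝ) :
    HasDerivAt (fun y => Real.sin y * H k y)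
      (Real.cos x * H k x + Real.sin x * (2 * (k : ℝ) * H (k - 1) x)) x :=
  (Real.hasDerivAt_sin x).mul (H_hasDerivAt k x)

lemma V_cos (k : ℕ) (x : ℝ) :
    HasDerivAt (fun y => Real.cos y * H k y)
      (-Real.sin x * H k x + Real.cos x * (2 * (k : ℝ) * H (k - 1) x)) x :=
  (Real.hasDerivAt_cos x).mul (H_hasDerivAt k x)

lemma aI_rec (m k : ℕ) : aI (m + 1) k = cI m k + 2 * (k : ℝ) * aI m (k - 1) := by
  have i1 := integrable_main m k Real.cos Real.continuous_cos fun x => abs_cos_le_one x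
  have i2 := (integrable_main m (k - 1) Real.sin Real.continuous_sin fun x =>
    abs_sin_le_one x).const_mul (2 * (k : ℝ))
  have i3 := integrable_main (m + 1) k Real.sin Real.continuous_sin fun x => abs_sin_le_one x
  have i4 := integrable_main m k Real.sin Real.continuous_sin fun x => abs_sin_le_one x
  have huv' : Integrable (fun x => (Real.exp (-x ^ 2) * H m x) *
      (Real.cos x * H k x + Real.sin x * (2 * (k : ℝ) * H (k - 1) x))) := by
    apply (i1.add i2).congr
    filter_upwards with x; try simp only [Pi.add_apply, Pi.neg_apply]
    ring
  have hu'v : Integrable (fun x => (-(Real.exp (-x ^ 2) * H (m + 1) x)) *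
      (Real.sin x * H k x)) := by
    apply i3.neg.congr
    filter_upwards with x; try simp only [Pi.add_apply, Pi.neg_apply]
    ring
  have huv : Integrable (fun x => (Real.exp (-x ^ 2) * H m x) * (Real.sin x * H k x)) := by
    apply i4.congr
    filter_upwards with x; try simp only [Pi.add_apply, Pi.neg_apply]
    ring
  have key := integral_mul_deriv_eq_deriv_mul_of_integrable
    (fun x _ => U_hasDerivAt m x) (fun x _ => V_sin k x) huv' hu'v huv
  have l1 : (∫ x : ℝ, (Real.exp (-x ^ 2) * H m x) *
      (Real.cos x * H k x + Real.sin x * (2 * (k : ℝ) * H (k - 1) x)))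
      = cI m k + 2 * (k : ℝ) * aI m (k - 1) := by
    have : (fun x : ℝ => (Real.exp (-x ^ 2) * H m x) *
        (Real.cos x * H k x + Real.sin x * (2 * (k : ℝ) * H (k - 1) x)))
        = fun x : ℝ => (Real.exp (-x ^ 2) * H m x * Real.cos x * H k x)
          + 2 * (k : ℝ) * (Real.exp (-x ^ 2) * H m x * Real.sin x * H (k - 1) x) := by
      funext x; ring
    rw [this, integral_add i1 i2, integral_const_mul]
    rfl
  have l2 : (∫ x : ℝ, (-(Real.exp (-x ^ 2) * H (m + 1) x)) * (Real.sin x * H k x))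
      = - aI (m + 1) k := by
    have : (fun x : ℝ => (-(Real.exp (-x ^ 2) * H (m + 1) x)) * (Real.sin x * H k x))
        = fun x : ℝ => -(Real.exp (-x ^ 2) * H (m + 1) x * Real.sin x * H k x) := by
      funext x; ring
    rw [this, integral_neg]
    rfl
  rw [l1, l2] at key
  linarith [key]

lemma cI_rec (m k : ℕ) : cI (m + 1) k = -aI m k + 2 * (k : ℝ) * cI m (k - 1) := by
  have i1 := integrable_main m k Real.sin Real.continuous_sin fun x => abs_sin_le_one x
  have i2 := (integrable_main m (k - 1) Real.cos Real.continuous_cos fun x =>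
    abs_cos_le_one x).const_mul (2 * (k : ℝ))
  have i3 := integrable_main (m + 1) k Real.cos Real.continuous_cos fun x => abs_cos_le_one x
  have i4 := integrable_main m k Real.cos Real.continuous_cos fun x => abs_cos_le_one x
  have huv' : Integrable (fun x => (Real.exp (-x ^ 2) * H m x) *
      (-Real.sin x * H k x + Real.cos x * (2 * (k : ℝ) * H (k - 1) x))) := by
    apply (i1.neg.add i2).congr
    filter_upwards with x; try simp only [Pi.add_apply, Pi.neg_apply]
    ring
  have hu'v : Integrable (fun x => (-(Real.exp (-x ^ 2) * H (m + 1) x)) *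
      (Real.cos x * H k x)) := by
    apply i3.neg.congr
    filter_upwards with x; try simp only [Pi.add_apply, Pi.neg_apply]
    ring
  have huv : Integrable (fun x => (Real.exp (-x ^ 2) * H m x) * (Real.cos x * H k x)) := by
    apply i4.congr
    filter_upwards with x; try simp only [Pi.add_apply, Pi.neg_apply]
    ring
  have key := integral_mul_deriv_eq_deriv_mul_of_integrable
    (fun x _ => U_hasDerivAt m x) (fun x _ => V_cos k x) huv' hu'v huv
  have l1 : (∫ x : ℝ, (Real.exp (-x ^ 2) * H m x) *
      (-Real.sin x * H k x + Real.cos x * (2 * (k : ℝ) * H (k - 1) x)))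
      = -aI m k + 2 * (k : ℝ) * cI m (k - 1) := by
    have : (fun x : ℝ => (Real.exp (-x ^ 2) * H m x) *
        (-Real.sin x * H k x + Real.cos x * (2 * (k : ℝ) * H (k - 1) x)))
        = fun x : ℝ => -(Real.exp (-x ^ 2) * H m x * Real.sin x * H k x)
          + 2 * (k : ℝ) * (Real.exp (-x ^ 2) * H m x * Real.cos x * H (k - 1) x) := by
      funext x; ring
    have i1' : Integrable (fun x : ℝ => -(Real.exp (-x ^ 2) * H m x * Real.sin x * H k x)) := by
      apply i1.neg.congr
      filter_upwards with x; simp only [Pi.neg_apply]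
    rw [this, integral_add i1' i2, integral_neg, integral_const_mul]
    rfl
  have l2 : (∫ x : ℝ, (-(Real.exp (-x ^ 2) * H (m + 1) x)) * (Real.cos x * H k x))
      = - cI (m + 1) k := by
    have : (fun x : ℝ => (-(Real.exp (-x ^ 2) * H (m + 1) x)) * (Real.cos x * H k x))
        = fun x : ℝ => -(Real.exp (-x ^ 2) * H (m + 1) x * Real.cos x * H k x) := by
      funext x; ring
    rw [this, integral_neg]
    rfl
  rw [l1, l2] at key
  linarith [key]

lemma aI_symm (m k : ℕ) : aI m k = aI k m := by
  unfold aI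
  congr 1; funext x; ring

lemma cI_symm (m k : ℕ) : cI m k = cI k m := by
  unfold cI
  congr 1; funext x; ring

lemma aI_zero_zero : aI 0 0 = 0 := by
  have h : (∫ x : ℝ, Real.exp (-x ^ 2) * H 0 x * Real.sin x * H 0 x)
      = - ∫ x : ℝ, Real.exp (-x ^ 2) * H 0 x * Real.sin x * H 0 x := by
    conv_lhs => rw [← (Measure.measurePreserving_neg (volume : Measure ℝ)).integral_comp
      (Homeomorph.neg ℝ).measurableEmbedding
      (fun x => Real.exp (-x ^ 2) * H 0 x * Real.sin x * H 0 x)]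
    rw [← integral_neg]
    congr 1; funext x
    simp [H, Real.sin_neg]
  have : aI 0 0 = - aI 0 0 := h
  linarith

noncomputable def pq : ℕ → ℝ × ℝ
  | 0 => (0, 1)
  | (n + 1) => ((pq n).2, -(pq n).1)

lemma pq_succ (n : ℕ) : pq (n + 1) = ((pq n).2, -(pq n).1) := rfl

lemma pq_add_two (n : ℕ) : pq (n + 2) = (-(pq n).1, -(pq n).2) := by
  simp [pq_succ]

lemma ac_formula (m : ℕ) : ∀ k : ℕ,
    aI m k = (pq (m + k)).1 * S m k * cI 0 0 ∧ cI m k = (pq (m + k)).2 * S m k * cI 0 0 := by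
  induction m with
  | zero =>
    intro k
    induction k with
    | zero =>
      constructor
      · simp [aI_zero_zero, pq]
      · simp [pq, S]
    | succ k ihk =>
      constructor
      · have h1 : aI 0 (k + 1) = aI (k + 1) 0 := aI_symm _ _
        rw [h1, aI_rec k 0]
        have h2 : cI k 0 = cI 0 k := cI_symm _ _
        rw [h2, ihk.2]
        simp [S, pq_succ]
      · have h1 : cI 0 (k + 1) = cI (k + 1) 0 := cI_symm _ _
        rw [h1, cI_rec k 0]
        have h2 : aI k 0 = aI 0 k := aI_symm _ _
        rw [h2, ihk.1]
        simp [S, pq_succ]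
        try ring
  | succ m ihm =>
    intro k
    constructor
    · rw [aI_rec m k, (ihm k).2]
      match k with
      | 0 =>
        simp [pq_succ, S_zero_right]
        try ring
      | (j + 1) =>
        simp only [Nat.add_sub_cancel]
        rw [(ihm j).1, S_succ m (j + 1)]
        simp only [Nat.add_sub_cancel]
        have e1 : (pq (m + 1 + (j + 1))).1 = -((pq (m + j)).1) := by
          have h : m + 1 + (j + 1) = (m + j) + 1 + 1 := by omega
          rw [h, pq_succ, pq_succ]
        have e2 : (pq (m + (j + 1))).2 = -((pq (m + j)).1) := by
          have h : m + (j + 1) = (m + j) + 1 := by omega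
          rw [h, pq_succ]
        rw [e1, e2]
        push_cast
        ring
    · rw [cI_rec m k, (ihm k).1]
      match k with
      | 0 =>
        simp [pq_succ, S_zero_right]
        try ring
      | (j + 1) =>
        simp only [Nat.add_sub_cancel]
        rw [(ihm j).2, S_succ m (j + 1)]
        simp only [Nat.add_sub_cancel]
        have e1 : (pq (m + 1 + (j + 1))).2 = -((pq (m + j)).2) := by
          have h : m + 1 + (j + 1) = (m + j) + 1 + 1 := by omega
          rw [h, pq_succ, pq_succ]
        have e2 : (pq (m + (j + 1))).1 = (pq (m + j)).2 := by
          have h : m + (j + 1) = (m + j) + 1 := by omega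
          rw [h, pq_succ]
        rw [e1, e2]
        push_cast
        ring


lemma b_eq (i k : ℕ) : b i k = 2 * (i : ℝ) * aI (i - 1) k := by
  unfold b aI
  rw [← integral_const_mul]
  congr 1; funext x
  rw [(H_hasDerivAt i x).deriv]
  ring

theorem b_recurrence (i k : ℕ) (hi : 1 ≤ i) :
    (i : ℝ) * (2 * (i : ℝ) - 2 * (k : ℝ) - 5) * b (i + 1) (k + 1)
      + ((i : ℝ) + 1) * b i (k + 2)
      - 4 * ((k : ℝ) + 1) * ((i : ℝ) + 1) * ((i : ℝ) - (k : ℝ) - 2) * b i k = 0 := by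
  obtain ⟨m, rfl⟩ : ∃ m, i = m + 1 := ⟨i - 1, by omega⟩
  have hb1 : b (m + 1 + 1) (k + 1) = 2 * ((m : ℝ) + 2) * aI (m + 1) (k + 1) := by
    have h := b_eq (m + 2) (k + 1)
    simp only [Nat.add_sub_cancel, show m + 2 - 1 = m + 1 by omega] at h
    push_cast at h
    convert h using 2
  have hb2 : b (m + 1) (k + 2) = 2 * ((m : ℝ) + 1) * aI m (k + 2) := by
    have h := b_eq (m + 1) (k + 2)
    simp only [Nat.add_sub_cancel] at h
    push_cast at h
    convert h using 2
  have hb3 : b (m + 1) k = 2 * ((m : ℝ) + 1) * aI m k := by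
    have h := b_eq (m + 1) k
    simp only [Nat.add_sub_cancel] at h
    push_cast at h
    convert h using 2
  have f1 := (ac_formula (m + 1) (k + 1)).1
  have f2 := (ac_formula m (k + 2)).1
  have f3 := (ac_formula m k).1
  have hp1 : (pq (m + 1 + (k + 1))).1 = -((pq (m + k)).1) := by
    have h : m + 1 + (k + 1) = (m + k) + 2 := by omega
    rw [h, pq_add_two]
  have hp2 : (pq (m + (k + 2))).1 = -((pq (m + k)).1) := by
    have h : m + (k + 2) = (m + k) + 2 := by omega
    rw [h, pq_add_two]
  rw [hp1] at f1
  rw [hp2] at f2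
  have key := Tstar m (k + 1)
  simp only [Nat.add_sub_cancel] at key
  rw [hb1, hb2, hb3, f1, f2, f3]
  push_cast at key ⊢
  linear_combination
    (-(2 * ((m : ℝ) + 1) * ((m : ℝ) + 2) * (pq (m + k)).1 * cI 0 0)) * key
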